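/- Let n ≥ 1 and let A, B, C be real n×n matrices with A and C symmetric positive definite. If the integral operator of the Gaussian kernel θ(A,B,C) is positive semidefinite, then the matrix A − C is positive semidefinite. -/

import Mathlib

open MeasureTheory Matrix Complex

noncomputable section

/-- The Gaussian function `θ(A,B,C)(x,y) =
  exp(−(x−y)ᵀA(x−y) − i·(x−y)ᵀB(x+y) − (x+y)ᵀC(x+y))`. -/
def theta {n : ℕ} (A B C : Matrix (Fin n) (Fin n) ℝ) (x y : Fin n → ℝ) : ℂ :=
  Complex.exp (-((((x - y) ⬝ᵥ A.mulVec (x - y)) : ℝ) : ℂ)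
    - Complex.I * ((((x - y) ⬝ᵥ B.mulVec (x + y)) : ℝ) : ℂ)
    - ((((x + y) ⬝ᵥ C.mulVec (x + y)) : ℝ) : ℂ))

/-- The integral operator of the kernel `κ` is positive semidefinite: for every
`f ∈ L²(ℝⁿ,ℂ)`, the integral `∬ κ(x,y) f(y) conj(f(x)) dy dx` is a nonnegative real. -/
def IsPosKernel {n : ℕ} (κ : (Fin n → ℝ) → (Fin n → ℝ) → ℂ) : Prop :=
  ∀ f : (Fin n → ℝ) → ℂ, MemLp f 2 volume →
    0 ≤ (∫ x, ∫ y, κ x y * f y * (starRingEnd ℂ) (f x)).re ∧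
      (∫ x, ∫ y, κ x y * f y * (starRingEnd ℂ) (f x)).im = 0

/-- Evaluation of a polynomial in `2n` variables with complex coefficients at real points. -/
def evalP {n : ℕ} (p : MvPolynomial (Fin n ⊕ Fin n) ℂ) (x y : Fin n → ℝ) : ℂ :=
  MvPolynomial.eval (Sum.elim (fun i => ((x i : ℝ) : ℂ)) (fun i => ((y i : ℝ) : ℂ))) p

/-- Joint continuity of the Gaussian kernel. -/
lemma theta_cont {n : ℕ} (A B C : Matrix (Fin n) (Fin n) ℝ) :
    Continuous fun z : (Fin n → ℝ) × (Fin n → ℝ) => theta A B C z.1 z.2 := by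
  have h1 : Continuous fun z : (Fin n → ℝ) × (Fin n → ℝ) => z.1 - z.2 :=
    continuous_fst.sub continuous_snd
  have h2 : Continuous fun z : (Fin n → ℝ) × (Fin n → ℝ) => z.1 + z.2 :=
    continuous_fst.add continuous_snd
  unfold theta
  exact Complex.continuous_exp.comp <|
    (((Complex.continuous_ofReal.comp
        (h1.dotProduct (continuous_const.matrix_mulVec h1))).neg).sub
      (continuous_const.mul (Complex.continuous_ofReal.comp
        (h1.dotProduct (continuous_const.matrix_mulVec h2))))).sub
      (Complex.continuous_ofReal.comp
        (h2.dotProduct (continuous_const.matrix_mulVec h2)))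

lemma theta_vv {n : ℕ} (A B C : Matrix (Fin n) (Fin n) ℝ) (v : Fin n → ℝ) :
    theta A B C v v = ((Real.exp (-((v + v) ⬝ᵥ C.mulVec (v + v))) : ℝ) : ℂ) := by
  simp [theta, Complex.ofReal_exp]

lemma theta_nn {n : ℕ} (A B C : Matrix (Fin n) (Fin n) ℝ) (v : Fin n → ℝ) :
    theta A B C (-v) (-v) = ((Real.exp (-((v + v) ⬝ᵥ C.mulVec (v + v))) : ℝ) : ℂ) := by
  unfold theta
  rw [show (-v : Fin n → ℝ) + -v = -(v + v) by abel]
  simp only [sub_self, zero_dotProduct, Matrix.mulVec_neg, dotProduct_neg,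
    neg_dotProduct, neg_neg, Complex.ofReal_zero, neg_zero, mul_zero, sub_zero,
    zero_sub, Complex.ofReal_exp, Complex.ofReal_neg]

lemma theta_vn {n : ℕ} (A B C : Matrix (Fin n) (Fin n) ℝ) (v : Fin n → ℝ) :
    theta A B C v (-v) = ((Real.exp (-((v + v) ⬝ᵥ A.mulVec (v + v))) : ℝ) : ℂ) := by
  simp [theta, Complex.ofReal_exp, sub_neg_eq_add]

lemma theta_nv {n : ℕ} (A B C : Matrix (Fin n) (Fin n) ℝ) (v : Fin n → ℝ) :
    theta A B C (-v) v = ((Real.exp (-((v + v) ⬝ᵥ A.mulVec (v + v))) : ℝ) : ℂ) := by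
  unfold theta
  rw [show (-v : Fin n → ℝ) - v = -(v + v) by abel, show (-v : Fin n → ℝ) + v = 0 by abel]
  simp only [Matrix.mulVec_neg, dotProduct_neg, neg_dotProduct, neg_neg,
    Matrix.mulVec_zero, dotProduct_zero, zero_dotProduct, Complex.ofReal_zero,
    mul_zero, sub_zero, Complex.ofReal_exp, Complex.ofReal_neg]

theorem posSemidef_sub_of_gaussian_posKernel
    {n : ℕ} (hn : 1 ≤ n) (A B C : Matrix (Fin n) (Fin n) ℝ)
    (hA : A.PosDef) (hC : C.PosDef)
    (hpos : IsPosKernel (theta A B C)) :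
    (A - C).PosSemidef := by
  refine Matrix.PosSemidef.of_dotProduct_mulVec_nonneg (hA.isHermitian.sub hC.isHermitian) fun v => ?_
  rw [star_trivial]
  by_contra hneg
  push_neg at hneg
  -- notation
  set a : ℝ := (v + v) ⬝ᵥ A.mulVec (v + v) with ha
  set c : ℝ := (v + v) ⬝ᵥ C.mulVec (v + v) with hc
  have key : ∀ M : Matrix (Fin n) (Fin n) ℝ,
      (v + v) ⬝ᵥ M.mulVec (v + v) = 4 * (v ⬝ᵥ M.mulVec v) := by
    intro M
    simp [Matrix.mulVec_add, dotProduct_add, add_dotProduct]; ring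
  have hac : a < c := by
    have h1 : a - c = 4 * (v ⬝ᵥ (A - C).mulVec v) := by
      rw [ha, hc, key A, key C]
      simp [Matrix.sub_mulVec, dotProduct_sub]; ring
    nlinarith
  set ε : ℝ := (Real.exp (-a) - Real.exp (-c)) / 4 with hε_def
  have hε : 0 < ε := by
    have := Real.exp_lt_exp.mpr (neg_lt_neg hac)
    simp only [hε_def]; linarith
  set Θ : (Fin n → ℝ) × (Fin n → ℝ) → ℂ := fun z => theta A B C z.1 z.2 with hΘdef
  have hΘ : Continuous Θ := theta_cont A B C
  -- choose radii from continuity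
  have hball : ∀ P : (Fin n → ℝ) × (Fin n → ℝ), ∃ δ > 0, ∀ z : (Fin n → ℝ) × (Fin n → ℝ),
      z.1 ∈ Metric.ball P.1 δ → z.2 ∈ Metric.ball P.2 δ → ‖Θ z - Θ P‖ ≤ ε := by
    intro P
    obtain ⟨δ, hδ, h⟩ := Metric.continuousAt_iff.mp hΘ.continuousAt ε hε
    refine ⟨δ, hδ, fun z h1 h2 => le_of_lt ?_⟩
    have : dist z P < δ := by
      rw [Prod.dist_eq]
      exact max_lt (Metric.mem_ball.mp h1) (Metric.mem_ball.mp h2)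
    simpa [dist_eq_norm] using h this
  obtain ⟨δ1, hδ1, h1⟩ := hball (v, v)
  obtain ⟨δ2, hδ2, h2⟩ := hball (-v, -v)
  obtain ⟨δ3, hδ3, h3⟩ := hball (v, -v)
  obtain ⟨δ4, hδ4, h4⟩ := hball (-v, v)
  set r : ℝ := min (min δ1 δ2) (min δ3 δ4) with hr_def
  have hr : 0 < r := lt_min (lt_min hδ1 hδ2) (lt_min hδ3 hδ4)
  set V : ℝ := (volume (Metric.ball (0 : Fin n → ℝ) r)).toReal with hV_def
  have hVpos : 0 < V := by
    rw [hV_def]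
    exact ENNReal.toReal_pos (Metric.measure_ball_pos volume 0 hr).ne' measure_ball_lt_top.ne
  -- the bound applies on balls of radius r
  have hbnd : ∀ (p q : Fin n → ℝ), (∀ z : (Fin n → ℝ) × (Fin n → ℝ),
        z.1 ∈ Metric.ball p r → z.2 ∈ Metric.ball q r → ‖Θ z - Θ (p, q)‖ ≤ ε) →
      IntegrableOn Θ (Metric.ball p r ×ˢ Metric.ball q r) (volume.prod volume) ∧
      |(∫ z in Metric.ball p r ×ˢ Metric.ball q r, Θ z ∂(volume.prod volume)).re
        - (Θ (p, q)).re * (V * V)| ≤ ε * (V * V) := by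
    intro p q hb
    set S : Set ((Fin n → ℝ) × (Fin n → ℝ)) := Metric.ball p r ×ˢ Metric.ball q r with hS_def
    have hSm : MeasurableSet S := measurableSet_ball.prod measurableSet_ball
    have hSμ : (volume.prod volume) S = volume (Metric.ball p r) * volume (Metric.ball q r) :=
      Measure.prod_prod _ _
    have hfin : (volume.prod volume) S < ⊤ := by
      rw [hSμ]
      exact ENNReal.mul_lt_top measure_ball_lt_top measure_ball_lt_top
    have hStoReal : ((volume.prod volume) S).toReal = V * V := by
      rw [hSμ, ENNReal.toReal_mul, hV_def, Measure.addHaar_ball_center volume p r,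
        Measure.addHaar_ball_center volume q r]
    have hint : IntegrableOn Θ S (volume.prod volume) := by
      apply Measure.integrableOn_of_bounded hfin.ne
        (hΘ.aestronglyMeasurable)
      filter_upwards [ae_restrict_mem hSm] with z hz
      calc ‖Θ z‖ = ‖Θ (p, q) + (Θ z - Θ (p, q))‖ := by ring_nf
        _ ≤ ‖Θ (p, q)‖ + ‖Θ z - Θ (p, q)‖ := norm_add_le _ _
        _ ≤ ‖Θ (p, q)‖ + ε := by
            have := hb z hz.1 hz.2
            linarith
    refine ⟨hint, ?_⟩
    have hsub : ∫ z in S, Θ z ∂(volume.prod volume) - (Θ (p, q)) * (V * V)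
        = ∫ z in S, (Θ z - Θ (p, q)) ∂(volume.prod volume) := by
      rw [integral_sub hint (integrableOn_const hfin.ne), setIntegral_const,
        measureReal_def, hStoReal]
      simp [smul_eq_mul, mul_comm]
    have hnorm : ‖∫ z in S, (Θ z - Θ (p, q)) ∂(volume.prod volume)‖ ≤ ε * (V * V) := by
      have := norm_setIntegral_le_of_norm_le_const (μ := volume.prod volume)
        (s := S) (f := fun z => Θ z - Θ (p, q)) hfin
        (fun z hz => hb z hz.1 hz.2)
      rwa [measureReal_def, hStoReal] at this
    calc |(∫ z in S, Θ z ∂(volume.prod volume)).re - (Θ (p, q)).re * (V * V)|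
        = |((∫ z in S, Θ z ∂(volume.prod volume)) - Θ (p, q) * (V * V)).re| := by
          congr 1
          simp [Complex.sub_re, Complex.mul_re, Complex.ofReal_re]
      _ ≤ ‖(∫ z in S, Θ z ∂(volume.prod volume)) - Θ (p, q) * (V * V)‖ :=
          Complex.abs_re_le_norm _
      _ ≤ ε * (V * V) := by rw [hsub]; exact hnorm
  -- apply the bound at the four center pairs
  have hrδ1 : r ≤ δ1 := (min_le_left _ _).trans (min_le_left _ _)
  have hrδ2 : r ≤ δ2 := (min_le_left _ _).trans (min_le_right _ _)
  have hrδ3 : r ≤ δ3 := (min_le_right _ _).trans (min_le_left _ _)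
  have hrδ4 : r ≤ δ4 := (min_le_right _ _).trans (min_le_right _ _)
  obtain ⟨hi11, he11⟩ := hbnd v v (fun z a b =>
    h1 z (Metric.ball_subset_ball hrδ1 a) (Metric.ball_subset_ball hrδ1 b))
  obtain ⟨hi22, he22⟩ := hbnd (-v) (-v) (fun z a b =>
    h2 z (Metric.ball_subset_ball hrδ2 a) (Metric.ball_subset_ball hrδ2 b))
  obtain ⟨hi12, he12⟩ := hbnd v (-v) (fun z a b =>
    h3 z (Metric.ball_subset_ball hrδ3 a) (Metric.ball_subset_ball hrδ3 b))
  obtain ⟨hi21, he21⟩ := hbnd (-v) v (fun z a b =>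
    h4 z (Metric.ball_subset_ball hrδ4 a) (Metric.ball_subset_ball hrδ4 b))
  -- the test function
  set Bp : Set (Fin n → ℝ) := Metric.ball v r with hBp_def
  set Bq : Set (Fin n → ℝ) := Metric.ball (-v) r with hBq_def
  set f : (Fin n → ℝ) → ℂ :=
    fun x => Bp.indicator (fun _ => (1 : ℂ)) x - Bq.indicator (fun _ => (1 : ℂ)) x with hf_def
  have hf2 : MemLp f 2 volume :=
    (memLp_indicator_const 2 measurableSet_ball (1 : ℂ) (Or.inr measure_ball_lt_top.ne)).sub
      (memLp_indicator_const 2 measurableSet_ball (1 : ℂ) (Or.inr measure_ball_lt_top.ne))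
  have hre := (hpos f hf2).1
  -- pointwise identity
  have hptw : ∀ z : (Fin n → ℝ) × (Fin n → ℝ),
      theta A B C z.1 z.2 * f z.2 * (starRingEnd ℂ) (f z.1)
      = ((Bp ×ˢ Bp).indicator Θ z + (Bq ×ˢ Bq).indicator Θ z)
        - ((Bp ×ˢ Bq).indicator Θ z + (Bq ×ˢ Bp).indicator Θ z) := by
    intro z
    have : Θ z = theta A B C z.1 z.2 := rfl
    classical
    simp only [hf_def, Set.indicator_apply, Set.mem_prod, map_sub, apply_ite (starRingEnd ℂ),
      _root_.map_one, _root_.map_zero, this, ite_and]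
    split_ifs <;> ring
  have hSm11 : MeasurableSet (Bp ×ˢ Bp) := measurableSet_ball.prod measurableSet_ball
  have hSm22 : MeasurableSet (Bq ×ˢ Bq) := measurableSet_ball.prod measurableSet_ball
  have hSm12 : MeasurableSet (Bp ×ˢ Bq) := measurableSet_ball.prod measurableSet_ball
  have hSm21 : MeasurableSet (Bq ×ˢ Bp) := measurableSet_ball.prod measurableSet_ball
  have j11 : Integrable ((Bp ×ˢ Bp).indicator Θ) (volume.prod volume) :=
    (integrable_indicator_iff hSm11).mpr hi11
  have j22 : Integrable ((Bq ×ˢ Bq).indicator Θ) (volume.prod volume) :=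
    (integrable_indicator_iff hSm22).mpr hi22
  have j12 : Integrable ((Bp ×ˢ Bq).indicator Θ) (volume.prod volume) :=
    (integrable_indicator_iff hSm12).mpr hi12
  have j21 : Integrable ((Bq ×ˢ Bp).indicator Θ) (volume.prod volume) :=
    (integrable_indicator_iff hSm21).mpr hi21
  have hG : Integrable (fun z : (Fin n → ℝ) × (Fin n → ℝ) =>
      theta A B C z.1 z.2 * f z.2 * (starRingEnd ℂ) (f z.1)) (volume.prod volume) := by
    simp only [hptw]
    exact (j11.add j22).sub (j12.add j21)
  have hfub :
      (∫ x, ∫ y, theta A B C x y * f y * (starRingEnd ℂ) (f x))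
        = ∫ z, theta A B C z.1 z.2 * f z.2 * (starRingEnd ℂ) (f z.1) ∂(volume.prod volume) :=
    MeasureTheory.integral_integral
      (f := fun x y => theta A B C x y * f y * (starRingEnd ℂ) (f x)) hG
  have hsplit : ∫ z, theta A B C z.1 z.2 * f z.2 * (starRingEnd ℂ) (f z.1) ∂(volume.prod volume)
      = ((∫ z in Bp ×ˢ Bp, Θ z ∂(volume.prod volume))
          + (∫ z in Bq ×ˢ Bq, Θ z ∂(volume.prod volume)))
        - ((∫ z in Bp ×ˢ Bq, Θ z ∂(volume.prod volume))
          + (∫ z in Bq ×ˢ Bp, Θ z ∂(volume.prod volume))) := by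
    simp only [hptw]
    have e := integral_sub (μ := volume.prod volume) (j11.add j22) (j12.add j21)
    simp only [Pi.add_apply] at e
    rw [e, integral_add j11 j22, integral_add j12 j21,
      integral_indicator hSm11, integral_indicator hSm22, integral_indicator hSm12,
      integral_indicator hSm21]
  rw [hfub, hsplit] at hre
  simp only [Complex.sub_re, Complex.add_re] at hre
  -- evaluate θ at the centers
  have e11 : (Θ ((v : Fin n → ℝ), (v : Fin n → ℝ))).re = Real.exp (-c) := by
    show (theta A B C v v).re = _
    rw [theta_vv]; exact Complex.ofReal_re _
  have e22 : (Θ (-v, -v)).re = Real.exp (-c) := by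
    show (theta A B C (-v) (-v)).re = _
    rw [theta_nn]; exact Complex.ofReal_re _
  have e12 : (Θ ((v : Fin n → ℝ), -v)).re = Real.exp (-a) := by
    show (theta A B C v (-v)).re = _
    rw [theta_vn]; exact Complex.ofReal_re _
  have e21 : (Θ (-v, (v : Fin n → ℝ))).re = Real.exp (-a) := by
    show (theta A B C (-v) v).re = _
    rw [theta_nv]; exact Complex.ofReal_re _
  rw [e11] at he11
  rw [e22] at he22
  rw [e12] at he12
  rw [e21] at he21
  obtain ⟨l11, u11⟩ := abs_le.mp he11
  obtain ⟨l22, u22⟩ := abs_le.mp he22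
  obtain ⟨l12, u12⟩ := abs_le.mp he12
  obtain ⟨l21, u21⟩ := abs_le.mp he21
  have hEa : Real.exp (-a) = Real.exp (-c) + 4 * ε := by rw [hε_def]; ring
  have h4 : Real.exp (-a) * (V * V) = Real.exp (-c) * (V * V) + 4 * (ε * (V * V)) := by
    rw [hEa]; ring
  have hεW : 0 < ε * (V * V) := mul_pos hε (mul_pos hVpos hVpos)
  linarith
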